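/- For u ∈ (−1,1) and ξ ∈ ℝ, the symplectic pairing of the two tangent vectors of the classical solitary manifold satisfies ∫_ℝ ( −∂_ξψ_0(ξ,u,x)·∂_uθ_0(ξ,u,x) + ∂_ξθ_0(ξ,u,x)·∂_uψ_0(ξ,u,x) ) dx = γ(u)³ · m, where m = ∫_ℝ (θ_K'(Z))² dZ. -/

import Mathlib

open MeasureTheory

noncomputable def thetaK (x : ℝ) : ℝ := 4 * Real.arctan (Real.exp x)

noncomputable def lorentz (u : ℝ) : ℝ := 1 / Real.sqrt (1 - u ^ 2)

noncomputable def theta0 (ξ u x : ℝ) : ℝ := thetaK (lorentz u * (x - ξ))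

noncomputable def psi0 (ξ u x : ℝ) : ℝ := -u * lorentz u * deriv thetaK (lorentz u * (x - ξ))

lemma thetaK_hasDerivAt (x : ℝ) :
    HasDerivAt thetaK (4 * Real.exp x / (1 + Real.exp x ^ 2)) x := by
  have h := ((Real.hasDerivAt_arctan (Real.exp x)).comp x (Real.hasDerivAt_exp x)).const_mul 4
  exact h.congr_deriv (by ring)

lemma deriv_thetaK (x : ℝ) : deriv thetaK x = 4 * Real.exp x / (1 + Real.exp x ^ 2) :=
  (thetaK_hasDerivAt x).deriv

noncomputable def D2 (x : ℝ) : ℝ :=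
  (4 * Real.exp x * (1 + Real.exp x ^ 2) - 4 * Real.exp x * (2 * Real.exp x * Real.exp x))
    / (1 + Real.exp x ^ 2) ^ 2

lemma derivThetaK_hasDerivAt (x : ℝ) : HasDerivAt (deriv thetaK) (D2 x) x := by
  have hne : (1 + Real.exp x ^ 2) ≠ 0 := by positivity
  have h1 : HasDerivAt (fun y => 4 * Real.exp y) (4 * Real.exp x) x :=
    (Real.hasDerivAt_exp x).const_mul 4
  have h2 : HasDerivAt (fun y => 1 + Real.exp y ^ 2) (2 * Real.exp x * Real.exp x) x := by
    have := ((Real.hasDerivAt_exp x).pow 2).const_add 1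
    exact this.congr_deriv (by ring)
  have h := h1.div h2 hne
  have heq : (fun y => 4 * Real.exp y / (1 + Real.exp y ^ 2)) = deriv thetaK := by
    funext y; rw [deriv_thetaK]
  rw [← heq]
  exact h

lemma lorentz_hasDerivAt {u : ℝ} (hu : u ∈ Set.Ioo (-1:ℝ) 1) :
    HasDerivAt lorentz (u * lorentz u ^ 3) u := by
  have h1u : (0:ℝ) < 1 - u ^ 2 := by nlinarith [hu.1, hu.2]
  have hs : (0:ℝ) < Real.sqrt (1 - u ^ 2) := Real.sqrt_pos.mpr h1u
  have hsq : Real.sqrt (1 - u ^ 2) ^ 2 = 1 - u ^ 2 := Real.sq_sqrt h1u.le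
  have hinner : HasDerivAt (fun v : ℝ => 1 - v ^ 2) (-(2 * u)) u := by
    have := ((hasDerivAt_pow 2 u).const_sub 1)
    exact this.congr_deriv (by ring)
  have hsqrt : HasDerivAt (fun v : ℝ => Real.sqrt (1 - v ^ 2))
      (1 / (2 * Real.sqrt (1 - u ^ 2)) * (-(2 * u))) u :=
    (Real.hasDerivAt_sqrt h1u.ne').comp u hinner
  have h := hsqrt.inv hs.ne'
  have heq : (fun v : ℝ => (Real.sqrt (1 - v ^ 2))⁻¹) = lorentz := by
    funext v; simp [lorentz, one_div]
  rw [show (fun v : ℝ => Real.sqrt (1 - v ^ 2))⁻¹ = lorentz from heq] at h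
  refine h.congr_deriv ?_
  symm
  unfold lorentz
  rw [div_pow, one_pow, pow_succ, hsq]
  field_simp

theorem symplectic_pairing_tangent_vectors (u : ℝ) (hu : u ∈ Set.Ioo (-1:ℝ) 1) (ξ : ℝ) :
    (∫ x : ℝ,
        (-(deriv (fun ξ' => psi0 ξ' u x) ξ) * (deriv (fun u' => theta0 ξ u' x) u)
          + (deriv (fun ξ' => theta0 ξ' u x) ξ) * (deriv (fun u' => psi0 ξ u' x) u)))
      = (lorentz u) ^ 3 * ∫ Z : ℝ, (deriv thetaK Z) ^ 2 := by
  have h1u : (0:ℝ) < 1 - u ^ 2 := by nlinarith [hu.1, hu.2]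
  have hs : (0:ℝ) < Real.sqrt (1 - u ^ 2) := Real.sqrt_pos.mpr h1u
  set γ := lorentz u with hγdef
  have hγpos : 0 < γ := by rw [hγdef]; unfold lorentz; positivity
  have hγ2 : γ ^ 2 * (1 - u ^ 2) = 1 := by
    rw [hγdef]; unfold lorentz
    rw [div_pow, one_pow, Real.sq_sqrt h1u.le]
    field_simp
  have key : ∀ x : ℝ,
      (-(deriv (fun ξ' => psi0 ξ' u x) ξ) * (deriv (fun u' => theta0 ξ u' x) u)
        + (deriv (fun ξ' => theta0 ξ' u x) ξ) * (deriv (fun u' => psi0 ξ u' x) u))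
      = γ ^ 4 * (deriv thetaK (γ * (x - ξ))) ^ 2 := by
    intro x
    set Z := γ * (x - ξ) with hZ
    set T' := deriv thetaK Z with hT'
    set T'' := D2 Z with hT''
    have hinξ : HasDerivAt (fun ξ' : ℝ => γ * (x - ξ')) (-γ) ξ := by
      have := ((hasDerivAt_id ξ).const_sub x).const_mul γ
      exact this.congr_deriv (by ring)
    have hC : HasDerivAt (fun ξ' => theta0 ξ' u x) (T' * (-γ)) ξ := by
      have := (thetaK_hasDerivAt Z).comp ξ hinξ
      exact this.congr_deriv (by rw [hT', deriv_thetaK])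
    have hA : HasDerivAt (fun ξ' => psi0 ξ' u x) (-u * γ * (T'' * (-γ))) ξ := by
      have := ((derivThetaK_hasDerivAt Z).comp ξ hinξ).const_mul (-u * γ)
      simpa [psi0, hZ, hT''] using this
    have hinu : HasDerivAt (fun u' : ℝ => lorentz u' * (x - ξ)) (u * γ ^ 3 * (x - ξ)) u :=
      (lorentz_hasDerivAt hu).mul_const (x - ξ)
    have hB : HasDerivAt (fun u' => theta0 ξ u' x) (T' * (u * γ ^ 3 * (x - ξ))) u := by
      have := (thetaK_hasDerivAt Z).comp u hinu
      exact this.congr_deriv (by rw [hT', deriv_thetaK])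
    have hD : HasDerivAt (fun u' => psi0 ξ u' x)
        ((-(γ + u * (u * γ ^ 3))) * T' + (-u * γ) * (T'' * (u * γ ^ 3 * (x - ξ)))) u := by
      have hfac : HasDerivAt (fun u' : ℝ => -u' * lorentz u') (-(γ + u * (u * γ ^ 3))) u := by
        have := ((hasDerivAt_id u).mul (lorentz_hasDerivAt hu)).neg
        rw [← hγdef] at this
        have hf : (fun u' : ℝ => -u' * lorentz u') = -(id * lorentz) := by
          funext v; simp only [id_eq, Pi.neg_apply, Pi.mul_apply]; ring
        rw [hf]
        exact this.congr_deriv (by simp only [id_eq, one_mul])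
      have hsecond : HasDerivAt (fun u' => deriv thetaK (lorentz u' * (x - ξ)))
          (T'' * (u * γ ^ 3 * (x - ξ))) u := by
        have := (derivThetaK_hasDerivAt Z).comp u hinu
        exact this
      have := hfac.mul hsecond
      simp only [psi0]
      exact this
    rw [hA.deriv, hB.deriv, hC.deriv, hD.deriv]
    have hkey : γ ^ 2 + u ^ 2 * γ ^ 4 = γ ^ 4 := by nlinarith [hγ2]
    have hT'eq : T' = deriv thetaK (γ * (x - ξ)) := hT'
    nlinarith [hkey, sq_nonneg T']
  rw [integral_congr_ae (Filter.Eventually.of_forall key)]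
  rw [MeasureTheory.integral_const_mul]
  have step1 : (∫ x : ℝ, (deriv thetaK (γ * (x - ξ))) ^ 2)
      = ∫ x : ℝ, (deriv thetaK (γ * x)) ^ 2 :=
    integral_sub_right_eq_self (fun y : ℝ => (deriv thetaK (γ * y)) ^ 2) ξ
  rw [step1]
  rw [MeasureTheory.Measure.integral_comp_mul_left (fun y => (deriv thetaK y) ^ 2) γ]
  rw [abs_of_pos (inv_pos.mpr hγpos), smul_eq_mul, ← mul_assoc]
  congr 1
  field_simp
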